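/- arXiv:1903.10567 — 2 statements merged into one kernel-verified Lean document; each statement's English description precedes it below -/
import Mathlib

section
/- Let K = (s_min, s_max) ⊆ ℝ, and let M_U, M_D : K → (0,∞) be continuous with continuous ratio R(s) = M_D(s)/M_U(s) strictly increasing and bijective onto (0,∞), with inverse T. Define the pointwise PSO divergence D(s*, s) = -p_U·(W_U(s) - W_U(s*)) + p_D·(W_D(s) - W_D(s*)), where p_U, p_D > 0, s* = T(p_U/p_D), and W_U, W_D are antiderivatives of M_U, M_D on K. Then D(s*, s) ≥ 0 for all s ∈ K, and D(s*, s) = 0 if and only if s = s*. -/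
open Set

/-- The pointwise PSO divergence `D(s*, s) = -p_U·(W_U(s) - W_U(s*)) + p_D·(W_D(s) - W_D(s*))`
with `s* = T(p_U/p_D)` is nonnegative on `K`, and vanishes iff `s = s*`. -/
theorem pso_divergence_pointwise
    (smin smax : ℝ) (R T MU MD WU WD : ℝ → ℝ) (pU pD : ℝ)
    (hpU : 0 < pU) (hpD : 0 < pD)
    -- the magnitude ratio R = M_D/M_U is continuous, strictly increasing and bijective onto (0,∞)
    (hRdef : ∀ s ∈ Ioo smin smax, MD s / MU s = R s)
    (hRcont : ContinuousOn R (Ioo smin smax))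
    (hRmono : StrictMonoOn R (Ioo smin smax))
    (hRpos : ∀ s ∈ Ioo smin smax, 0 < R s)
    (hRsurj : ∀ z : ℝ, 0 < z → ∃ s ∈ Ioo smin smax, R s = z)
    -- T is the inverse of R between (0,∞) and K
    (hTmem : ∀ z : ℝ, 0 < z → T z ∈ Ioo smin smax)
    (hRT : ∀ z : ℝ, 0 < z → R (T z) = z)
    (hTR : ∀ s ∈ Ioo smin smax, T (R s) = s)
    -- the magnitudes are continuous and positive on K
    (hMUcont : ContinuousOn MU (Ioo smin smax))
    (hMDcont : ContinuousOn MD (Ioo smin smax))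
    (hMUpos : ∀ s ∈ Ioo smin smax, 0 < MU s)
    (hMDpos : ∀ s ∈ Ioo smin smax, 0 < MD s)
    -- W_U and W_D are antiderivatives of M_U and M_D on K
    (hWU : ∀ s ∈ Ioo smin smax, HasDerivAt WU (MU s) s)
    (hWD : ∀ s ∈ Ioo smin smax, HasDerivAt WD (MD s) s) :
    ∀ s ∈ Ioo smin smax,
      0 ≤ -pU * (WU s - WU (T (pU / pD))) + pD * (WD s - WD (T (pU / pD))) ∧
      (-pU * (WU s - WU (T (pU / pD))) + pD * (WD s - WD (T (pU / pD))) = 0 ↔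
        s = T (pU / pD)) := by
  have hz : 0 < pU / pD := div_pos hpU hpD
  set s0 := T (pU / pD) with hs0def
  have hs0 : s0 ∈ Ioo smin smax := hTmem _ hz
  have hRs0 : R s0 = pU / pD := hRT _ hz
  set F : ℝ → ℝ := fun x => -pU * WU x + pD * WD x with hFdef
  have hF : ∀ x ∈ Ioo smin smax, HasDerivAt F (-pU * MU x + pD * MD x) x := by
    intro x hx
    exact ((hWU x hx).const_mul (-pU)).add ((hWD x hx).const_mul pD)
  have hMD_eq : ∀ x ∈ Ioo smin smax, MD x = R x * MU x := by
    intro x hx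
    have h := hRdef x hx
    field_simp [ne_of_gt (hMUpos x hx)] at h
    linarith
  have hderiv : ∀ x ∈ Ioo smin smax, deriv F x = MU x * (pD * R x - pU) := by
    intro x hx
    rw [(hF x hx).deriv, hMD_eq x hx]; ring
  have hFcont : ContinuousOn F (Ioo smin smax) := fun x hx =>
    (hF x hx).continuousAt.continuousWithinAt
  have hsub1 : Ioc smin s0 ⊆ Ioo smin smax := fun x hx => ⟨hx.1, lt_of_le_of_lt hx.2 hs0.2⟩
  have hsub2 : Ico s0 smax ⊆ Ioo smin smax := fun x hx => ⟨lt_of_lt_of_le hs0.1 hx.1, hx.2⟩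
  have hanti : StrictAntiOn F (Ioc smin s0) := by
    apply strictAntiOn_of_deriv_neg (convex_Ioc _ _) (hFcont.mono hsub1)
    intro x hx
    rw [interior_Ioc] at hx
    have hx' : x ∈ Ioo smin smax := ⟨hx.1, lt_trans hx.2 hs0.2⟩
    rw [hderiv x hx']
    have hR : R x < pU / pD := hRs0 ▸ hRmono hx' hs0 hx.2
    have h2 : R x * pD < pU := (lt_div_iff₀ hpD).mp hR
    exact mul_neg_of_pos_of_neg (hMUpos x hx') (by linarith)
  have hmono : StrictMonoOn F (Ico s0 smax) := by
    apply strictMonoOn_of_deriv_pos (convex_Ico _ _) (hFcont.mono hsub2)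
    intro x hx
    rw [interior_Ico] at hx
    have hx' : x ∈ Ioo smin smax := ⟨lt_trans hs0.1 hx.1, hx.2⟩
    rw [hderiv x hx']
    have hR : pU / pD < R x := hRs0 ▸ hRmono hs0 hx' hx.1
    have h2 : pU < R x * pD := (div_lt_iff₀ hpD).mp hR
    exact mul_pos (hMUpos x hx') (by linarith)
  intro s hs
  have hkey : s ≠ s0 → F s0 < F s := by
    intro hne
    rcases lt_or_gt_of_ne hne with h | h
    · exact hanti ⟨hs.1, le_of_lt h⟩ ⟨hs0.1, le_refl _⟩ h
    · exact hmono ⟨le_refl _, hs0.2⟩ ⟨le_of_lt h, hs.2⟩ h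
  have hD : -pU * (WU s - WU s0) + pD * (WD s - WD s0) = F s - F s0 := by
    simp only [hFdef]; ring
  rw [hD]
  by_cases hne : s = s0
  · subst hne; simp
  · have := hkey hne
    constructor
    · linarith
    · constructor
      · intro h; exact absurd h (by linarith)
      · intro h; exact absurd h hne
end

section
/- Suppose that at a stationary point of the empirical PSO loss we have, for a training point X with kernel values g(X, ·) ≥ 0 and g(X,X) > 0: M_U(X, f(X)) · g(X,X) + Σᵢ M_U(Xᵢᵁ, f(Xᵢᵁ)) · g(X, Xᵢᵁ) = (Nᵁ/Nᴰ) · Σⱼ M_D(Xⱼᴰ, f(Xⱼᴰ)) · g(X, Xⱼᴰ), where all M_U and M_D values are nonnegative. If moreover the relative kernel satisfies g(X, Xⱼᴰ)/g(X,X) ≤ exp(-d(X, Xⱼᴰ)/h_max) for each j, then M_U(X, f(X)) ≤ α where α = (Nᵁ/Nᴰ) · Σⱼ M_D(Xⱼᴰ, f(Xⱼᴰ)) · exp(-d(X, Xⱼᴰ)/h_max). Consequently, if M_U(X, ·) is continuous and strictly decreasing in its second argument, then f(X) ≥ (M_U(X, ·))⁻¹(α). -/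
/-- Core inequality of the spike-convergence theorem: at a stationary point of the empirical
PSO loss, the up magnitude at a training point `X` is bounded by
`α = (Nᵁ/Nᴰ)·Σⱼ M_D(Xⱼᴰ, f(Xⱼᴰ))·exp(-d(X,Xⱼᴰ)/h_max)`; consequently, if `M_U(X,·)` is
continuous and strictly decreasing, then `f(X) ≥ M_U(X,·)⁻¹(α)`. -/
theorem pso_spike_convergence_bound
    (NU ND : ℕ) (hNU : 0 < NU) (hND : 0 < ND)
    (gXX : ℝ) (hgXX : 0 < gXX)
    (gU : Fin NU → ℝ) (gD : Fin ND → ℝ)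
    (hgU : ∀ i, 0 ≤ gU i) (hgD : ∀ j, 0 ≤ gD j)
    (mU : ℝ) (mUi : Fin NU → ℝ) (mDj : Fin ND → ℝ)
    (hmU : 0 ≤ mU) (hmUi : ∀ i, 0 ≤ mUi i) (hmDj : ∀ j, 0 ≤ mDj j)
    -- first-order stationarity projected on ∇f(X)
    (hstat : mU * gXX + ∑ i, mUi i * gU i = ((NU : ℝ) / ND) * ∑ j, mDj j * gD j)
    (dD : Fin ND → ℝ) (hmax : ℝ) (hhmax : 0 < hmax)
    -- relative kernel bound
    (hrel : ∀ j, gD j / gXX ≤ Real.exp (-(dD j) / hmax))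
    (fX : ℝ) (MUfun : ℝ → ℝ)
    (hval : MUfun fX = mU)
    (hcont : Continuous MUfun) (hanti : StrictAnti MUfun) :
    mU ≤ ((NU : ℝ) / ND) * ∑ j, mDj j * Real.exp (-(dD j) / hmax) ∧
    ∀ s : ℝ, MUfun s = ((NU : ℝ) / ND) * ∑ j, mDj j * Real.exp (-(dD j) / hmax) →
      s ≤ fX := by
  have hα : mU ≤ ((NU : ℝ) / ND) * ∑ j, mDj j * Real.exp (-(dD j) / hmax) := by
    have h1 : mU * gXX ≤ ((NU : ℝ) / ND) * ∑ j, mDj j * gD j := by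
      have : 0 ≤ ∑ i, mUi i * gU i :=
        Finset.sum_nonneg fun i _ => mul_nonneg (hmUi i) (hgU i)
      linarith [hstat]
    have h2 : ∑ j, mDj j * gD j ≤ ∑ j, mDj j * (gXX * Real.exp (-(dD j) / hmax)) := by
      apply Finset.sum_le_sum
      intro j _
      apply mul_le_mul_of_nonneg_left _ (hmDj j)
      have := hrel j
      rw [div_le_iff₀ hgXX] at this
      linarith [this]
    have hND' : (0:ℝ) < (NU : ℝ) / ND := by positivity
    have h3 : mU * gXX ≤ ((NU : ℝ) / ND) * ∑ j, mDj j * (gXX * Real.exp (-(dD j) / hmax)) :=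
      h1.trans (mul_le_mul_of_nonneg_left h2 hND'.le)
    have h4 : ∑ j, mDj j * (gXX * Real.exp (-(dD j) / hmax))
        = (∑ j, mDj j * Real.exp (-(dD j) / hmax)) * gXX := by
      rw [Finset.sum_mul]; congr 1; ext j; ring
    rw [h4, ← mul_assoc] at h3
    exact le_of_mul_le_mul_right h3 hgXX
  refine ⟨hα, fun s hs => ?_⟩
  have : MUfun fX ≤ MUfun s := by rw [hval, hs]; exact hα
  exact (hanti.le_iff_ge).mp this
end
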